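/- Let R be a nontrivial commutative local ring, let n and m ≥ 1 be natural numbers, and let α : Fin n → R be such that α i - α j is a unit of R whenever i ≠ j. Then the quotient ring A = R[X]/⟨(∏_{i : Fin n} (X - C (α i)))^m⟩ has exactly 2^n idempotent elements, i.e., the set {e : A | e * e = e} has cardinality 2^n. -/

import Mathlib

open Polynomial

section Aux

variable {R : Type*} [CommRing R]

/-- In a local ring, the only idempotents are 0 and 1. -/
lemma aux_idem_local [IsLocalRing R] {e : R} (he : e * e = e) : e = 0 ∨ e = 1 := by
  rcases IsLocalRing.isUnit_or_isUnit_one_sub_self e with h | h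
  · right
    obtain ⟨u, hu⟩ := h
    have : (1 : R) = e := by
      calc (1 : R) = ↑u⁻¹ * ↑u := u.inv_mul.symm
        _ = ↑u⁻¹ * e := by rw [hu]
        _ = ↑u⁻¹ * (e * e) := by rw [he]
        _ = (↑u⁻¹ * e) * e := by ring
        _ = (↑u⁻¹ * ↑u) * e := by rw [hu]
        _ = e := by rw [u.inv_mul, one_mul]
    exact this.symm
  · left
    obtain ⟨u, hu⟩ := h
    have h0 : (1 - e) * e = 0 := by linear_combination -he
    calc e = ↑u⁻¹ * (↑u * e) := by rw [← mul_assoc, u.inv_mul, one_mul]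
      _ = 0 := by rw [hu, h0, mul_zero]

lemma aux_quot_local [IsLocalRing R] (m : ℕ) (hm : 1 ≤ m) (a : R) :
    IsLocalRing (R[X] ⧸ Ideal.span {(X - C a) ^ m}) := by
  set I : Ideal R[X] := Ideal.span {(X - C a) ^ m} with hI
  have hnt : Nontrivial (R[X] ⧸ I) := by
    refine Ideal.Quotient.nontrivial_iff.mpr ?_
    rw [hI, Ne, Ideal.span_singleton_eq_top]
    intro hu
    have hmonic : ((X - C a) ^ m).Monic := (monic_X_sub_C a).pow m
    have h1 := hmonic.isUnit_iff.mp hu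
    have h2 : ((X - C a) ^ m).natDegree = m := by
      rw [(monic_X_sub_C a).natDegree_pow, natDegree_X_sub_C, mul_one]
    rw [h1, natDegree_one] at h2
    omega
  have hnilX : IsNilpotent (Ideal.Quotient.mk I (X - C a)) := by
    refine ⟨m, ?_⟩
    rw [← map_pow, Ideal.Quotient.eq_zero_iff_mem]
    exact Ideal.subset_span rfl
  refine IsLocalRing.of_isUnit_or_isUnit_one_sub_self fun b => ?_
  obtain ⟨p, rfl⟩ := Ideal.Quotient.mk_surjective b
  obtain ⟨q, hq⟩ : (X - C a) ∣ (p - C (p.eval a)) := by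
    apply dvd_iff_isRoot.mpr
    simp [IsRoot]
  have hdecomp : p = C (p.eval a) + (X - C a) * q := by linear_combination hq
  have hnil : IsNilpotent (Ideal.Quotient.mk I ((X - C a) * q)) := by
    rw [map_mul]
    exact (Commute.all _ _).isNilpotent_mul_right hnilX
  rcases IsLocalRing.isUnit_or_isUnit_one_sub_self (p.eval a) with h | h
  · left
    have hu : IsUnit (Ideal.Quotient.mk I (C (p.eval a))) :=
      (h.map (C : R →+* R[X])).map (Ideal.Quotient.mk I)
    rw [hdecomp, map_add]
    exact hnil.isUnit_add_left_of_commute hu (Commute.all _ _)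
  · right
    have hu : IsUnit (Ideal.Quotient.mk I (C (1 - p.eval a))) :=
      (h.map (C : R →+* R[X])).map (Ideal.Quotient.mk I)
    have key : (1 : R[X] ⧸ I) - Ideal.Quotient.mk I p =
        Ideal.Quotient.mk I (-((X - C a) * q)) + Ideal.Quotient.mk I (C (1 - p.eval a)) := by
      rw [← map_add, ← map_one (Ideal.Quotient.mk I), ← map_sub]
      congr 1
      rw [C_sub, C_1]
      linear_combination -hq
    rw [key]
    exact (hnil.neg).isUnit_add_right_of_commute hu (Commute.all _ _)

/-- In a nontrivial local ring, the number of idempotents is 2. -/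
lemma aux_card_idem [IsLocalRing R] :
    Nat.card {e : R // e * e = e} = 2 := by
  have hset : {e : R | e * e = e} = {0, 1} := by
    ext e
    constructor
    · exact fun h => aux_idem_local h
    · rintro (rfl | rfl) <;> simp
  have : Nat.card {e : R // e * e = e} = Nat.card ({0, 1} : Set R) := by
    rw [← hset]; rfl
  rw [this, Nat.card_coe_set_eq, Set.ncard_pair zero_ne_one]

end Aux

/-- If `R` is a nontrivial commutative local ring, `m ≥ 1` and `α : Fin n → R` has
pairwise unit differences, then `R[X]/⟨(∏ i, (X - C (α i)))^m⟩` has exactly `2^n`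
idempotents. -/
theorem card_idempotents_eq_two_pow {R : Type*} [CommRing R] [IsLocalRing R]
    (n m : ℕ) (hm : 1 ≤ m) (α : Fin n → R)
    (hα : ∀ i j : Fin n, i ≠ j → IsUnit (α i - α j)) :
    Nat.card {e : R[X] ⧸ Ideal.span {(∏ i : Fin n, (X - C (α i))) ^ m} // e * e = e}
      = 2 ^ n := by
  have hcop : ∀ i j : Fin n, i ≠ j → IsCoprime ((X - C (α i)) ^ m) ((X - C (α j)) ^ m) := by
    intro i j hij
    refine IsCoprime.pow ?_
    obtain ⟨u, hu⟩ := hα i j hij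
    have hv1 : (↑u⁻¹ : R) * (α i - α j) = 1 := by rw [← hu]; exact u.inv_mul
    refine ⟨-C (↑u⁻¹ : R), C (↑u⁻¹ : R), ?_⟩
    calc -C (↑u⁻¹ : R) * (X - C (α i)) + C (↑u⁻¹ : R) * (X - C (α j))
        = C (↑u⁻¹ : R) * (C (α i) - C (α j)) := by ring
      _ = C ((↑u⁻¹ : R) * (α i - α j)) := by rw [← C_sub, ← C_mul]
      _ = 1 := by rw [hv1, C_1]
  have hspan : Ideal.span {(∏ i : Fin n, (X - C (α i))) ^ m}
      = ⨅ i : Fin n, Ideal.span {(X - C (α i)) ^ m} := by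
    rw [Ideal.iInf_span_singleton hcop, Finset.prod_pow]
  have hpair : Pairwise (Function.onFun IsCoprime fun i : Fin n =>
      Ideal.span ({(X - C (α i)) ^ m} : Set R[X])) := by
    intro i j hij
    rw [Function.onFun, Ideal.isCoprime_span_singleton_iff]
    exact hcop i j hij
  -- the CRT equivalence
  let φ : (R[X] ⧸ Ideal.span {(∏ i : Fin n, (X - C (α i))) ^ m}) ≃+*
      ∀ i : Fin n, R[X] ⧸ Ideal.span ({(X - C (α i)) ^ m} : Set R[X]) :=
    (Ideal.quotEquivOfEq hspan).trans (Ideal.quotientInfRingEquivPiQuotient _ hpair)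
  -- transfer idempotents along φ
  have e1 : {e : R[X] ⧸ Ideal.span {(∏ i : Fin n, (X - C (α i))) ^ m} // e * e = e} ≃
      {f : ∀ i : Fin n, R[X] ⧸ Ideal.span ({(X - C (α i)) ^ m} : Set R[X]) // f * f = f} :=
    Equiv.subtypeEquiv φ.toEquiv (fun e => by
      constructor
      · intro h
        show φ e * φ e = φ e
        rw [← map_mul, h]
      · intro h
        apply φ.injective
        rw [map_mul]
        exact h)
  have e2 : {f : ∀ i : Fin n, R[X] ⧸ Ideal.span ({(X - C (α i)) ^ m} : Set R[X]) // f * f = f}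
      ≃ ∀ i : Fin n, {e : R[X] ⧸ Ideal.span ({(X - C (α i)) ^ m} : Set R[X]) // e * e = e} :=
    (Equiv.subtypeEquiv (Equiv.refl _) (fun f => by
      simp only [Equiv.refl_apply]
      constructor
      · intro h i
        exact congrFun h i
      · intro h
        funext i
        exact h i)).trans Equiv.subtypePiEquivPi
  rw [Nat.card_congr (e1.trans e2), Nat.card_pi]
  have : ∀ i : Fin n,
      Nat.card {e : R[X] ⧸ Ideal.span ({(X - C (α i)) ^ m} : Set R[X]) // e * e = e} = 2 := by
    intro i
    have := aux_quot_local (R := R) m hm (α i)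
    exact aux_card_idem
  simp [this, Finset.prod_const]
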